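/- Let A ∈ M₂(ℤ) be an expanding matrix and let D ⊂ ℝ² be a digit set of cardinality |det A|. Set T₁ = T(A, D) and T₂ = T(−A, D). Then for any l ∈ ℝ², T₁ ∩ (T₁ + l) ≠ ∅ if and only if T₂ ∩ (T₂ + l) ≠ ∅ (equivalently, l ∈ T₁ − T₁ if and only if l ∈ T₂ − T₂). -/

import Mathlib

open Matrix Polynomial

/-- The real matrix obtained from an integer matrix by entrywise coercion. -/
noncomputable def matR {n : ℕ} (A : Matrix (Fin n) (Fin n) ℤ) : Matrix (Fin n) (Fin n) ℝ :=
  A.map (fun a => (a : ℝ))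

/-- An integer matrix is expanding if every complex root of its characteristic
polynomial (i.e. every eigenvalue) has modulus strictly greater than 1. -/
def IsExpanding {n : ℕ} (A : Matrix (Fin n) (Fin n) ℤ) : Prop :=
  ∀ z : ℂ, Polynomial.aeval z A.charpoly = 0 → 1 < ‖z‖

/-- The self-affine set `T(A, D) = { ∑_{i≥1} A^{-i} d_i : d_i ∈ D }`. -/
noncomputable def selfAffine {n : ℕ} (A : Matrix (Fin n) (Fin n) ℤ)
    (D : Set (Fin n → ℝ)) : Set (Fin n → ℝ) :=
  {x | ∃ d : ℕ → (Fin n → ℝ), (∀ i, d i ∈ D) ∧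
    HasSum (fun i => ((matR A)⁻¹ ^ (i + 1)).mulVec (d i)) x}
lemma matR_neg {n : ℕ} (A : Matrix (Fin n) (Fin n) ℤ) : matR (-A) = -(matR A) := by
  ext i j; simp [matR]

lemma inv_neg_mat (B : Matrix (Fin 2) (Fin 2) ℝ) : (-B)⁻¹ = -(B⁻¹) := by
  have h : -B = (-1 : ℝ) • B := by simp
  rw [Matrix.inv_def, Matrix.inv_def, h, Matrix.det_smul, Matrix.adjugate_smul]
  simp [Fintype.card_fin]

lemma neg_pow_mulVec (M : Matrix (Fin 2) (Fin 2) ℝ) (k : ℕ) (v : Fin 2 → ℝ) :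
    ((-M) ^ k).mulVec v = ((-1 : ℝ) ^ k) • (M ^ k).mulVec v := by
  have h : (-M) ^ k = ((-1 : ℝ) ^ k) • M ^ k := by
    rw [show -M = (-1 : ℝ) • M by simp, _root_.smul_pow]
  rw [h, Matrix.smul_mulVec]

lemma key_dir (A : Matrix (Fin 2) (Fin 2) ℤ) (D : Set (Fin 2 → ℝ)) (l : Fin 2 → ℝ)
    (h : ∃ x ∈ selfAffine A D, x + l ∈ selfAffine A D) :
    ∃ x ∈ selfAffine (-A) D, x + l ∈ selfAffine (-A) D := by
  obtain ⟨x, ⟨d, hd, hdx⟩, ⟨e, he, hex⟩⟩ := h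
  set M := (matR A)⁻¹ with hM
  have hinv : (matR (-A))⁻¹ = -M := by rw [matR_neg, inv_neg_mat]
  set dT : ℕ → (Fin 2 → ℝ) := fun i => (M ^ (i + 1)).mulVec (d i) with hdT
  set eT : ℕ → (Fin 2 → ℝ) := fun i => (M ^ (i + 1)).mulVec (e i) with heT
  set f : ℕ → (Fin 2 → ℝ) := fun i => if Even i then e i else d i with hf
  set g : ℕ → (Fin 2 → ℝ) := fun i => if Even i then d i else e i with hg
  set F : ℕ → (Fin 2 → ℝ) := fun i => ((matR (-A))⁻¹ ^ (i + 1)).mulVec (f i) with hF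
  set G : ℕ → (Fin 2 → ℝ) := fun i => ((matR (-A))⁻¹ ^ (i + 1)).mulVec (g i) with hG
  have hFe : ∀ i, F i = if Even i then -(eT i) else dT i := by
    intro i
    rw [hF]; simp only [hinv, neg_pow_mulVec]
    by_cases hi : Even i
    · have : Odd (i + 1) := Even.add_one hi
      simp [hi, hf, this.neg_one_pow, heT]
    · have : Even (i + 1) := Odd.add_one (Nat.not_even_iff_odd.mp hi)
      simp [hi, hf, this.neg_one_pow, hdT]
  have hGe : ∀ i, G i = if Even i then -(dT i) else eT i := by
    intro i
    rw [hG]; simp only [hinv, neg_pow_mulVec]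
    by_cases hi : Even i
    · have : Odd (i + 1) := Even.add_one hi
      simp [hi, hg, this.neg_one_pow, hdT]
    · have : Even (i + 1) := Odd.add_one (Nat.not_even_iff_odd.mp hi)
      simp [hi, hg, this.neg_one_pow, heT]
  have Sd : Summable dT := hdx.summable
  have Se : Summable eT := hex.summable
  have SF : Summable F := by
    have h1 : Summable (Set.indicator {i : ℕ | Even i} (fun i => -(eT i))) :=
      Se.neg.indicator _
    have h2 : Summable (Set.indicator {i : ℕ | Even i}ᶜ dT) := Sd.indicator _
    have := h1.add h2
    refine this.congr fun i => ?_
    by_cases hi : Even i <;>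
      simp [hFe i, hi, Set.indicator_apply]
  have SG : Summable G := by
    have h1 : Summable (Set.indicator {i : ℕ | Even i} (fun i => -(dT i))) :=
      Sd.neg.indicator _
    have h2 : Summable (Set.indicator {i : ℕ | Even i}ᶜ eT) := Se.indicator _
    have := h1.add h2
    refine this.congr fun i => ?_
    by_cases hi : Even i <;>
      simp [hGe i, hi, Set.indicator_apply]
  have hu : HasSum F (∑' i, F i) := SF.hasSum
  have hv : HasSum G (∑' i, G i) := SG.hasSum
  have hsub : HasSum (fun i => G i - F i) ((∑' i, G i) - ∑' i, F i) := hv.sub hu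
  have hsub' : HasSum (fun i => G i - F i) l := by
    have heq : (fun i => G i - F i) = fun i => eT i - dT i := by
      funext i
      by_cases hi : Even i <;> simp [hGe i, hFe i, hi] <;> abel
    rw [heq]
    have := hex.sub hdx
    simpa using this
  have hl : (∑' i, G i) = (∑' i, F i) + l := by
    exact sub_eq_iff_eq_add'.mp (hsub.unique hsub')
  refine ⟨∑' i, F i, ⟨f, fun i => ?_, hu⟩, ?_⟩
  · by_cases hi : Even i <;> simp [hf, hi, hd i, he i]
  · rw [← hl]
    exact ⟨g, fun i => by by_cases hi : Even i <;> simp [hg, hi, hd i, he i], hv⟩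

/-- `T₁ = T(A, D)` and `T₂ = T(-A, D)` have the same neighbors:
`T₁ ∩ (T₁ + l) ≠ ∅` iff `T₂ ∩ (T₂ + l) ≠ ∅`. -/
theorem neighbors_neg (A : Matrix (Fin 2) (Fin 2) ℤ) (hA : IsExpanding A)
    (D : Finset (Fin 2 → ℝ)) (hcard : D.card = A.det.natAbs)
    (l : Fin 2 → ℝ) :
    (∃ x ∈ selfAffine A ↑D, x + l ∈ selfAffine A ↑D) ↔
    (∃ x ∈ selfAffine (-A) ↑D, x + l ∈ selfAffine (-A) ↑D) := by
  constructor
  · exact key_dir A ↑D l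
  · intro h
    have := key_dir (-A) ↑D l h
    rwa [neg_neg] at this
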